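/- arXiv:1612.04671 — 2 statements merged into one kernel-verified Lean document; each statement's English description precedes it below -/
import Mathlib

section
/- Let b, d > 0 with sin(√b·d) ≠ 0, u₀(z) = sin(√b·z)/sin(√b·d), and let ω₁ be continuously differentiable with ω₁(0) = ω₁(u₀(d)) = ω₁(1) = 0. If u₁ solves u₁'' + b·u₁ = −ω₁(u₀), u₁(0) = u₁(d) = 0, then u₁'(d) = −(1/sin(√b·d))·∫₀ᵈ ω₁(u₀(z))·sin(√b·z) dz = −∫₀ᵈ ω₁'(u₀(z))·cos²(√b·z)/sin²(√b·d) dz. -/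
open Real Set intervalIntegral

theorem stmt_2 (b d : ℝ) (hb : 0 < b) (hd : 0 < d)
    (hsin : Real.sin (Real.sqrt b * d) ≠ 0)
    (u₀ : ℝ → ℝ) (hu₀ : u₀ = fun z => Real.sin (Real.sqrt b * z) / Real.sin (Real.sqrt b * d))
    (ω₁ : ℝ → ℝ) (hω₁ : ContDiff ℝ 1 ω₁)
    (hω₁0 : ω₁ 0 = 0) (hω₁d : ω₁ (u₀ d) = 0) (hω₁1 : ω₁ 1 = 0)
    (u₁ : ℝ → ℝ) (hu₁ : ContDiff ℝ 2 u₁)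
    (hode : ∀ z ∈ Set.Icc (0:ℝ) d, deriv (deriv u₁) z + b * u₁ z = - ω₁ (u₀ z))
    (h0 : u₁ 0 = 0) (hdd : u₁ d = 0) :
    deriv u₁ d = -(1 / Real.sin (Real.sqrt b * d)) *
        ∫ z in (0:ℝ)..d, ω₁ (u₀ z) * Real.sin (Real.sqrt b * z) ∧
    deriv u₁ d = - ∫ z in (0:ℝ)..d,
        deriv ω₁ (u₀ z) * Real.cos (Real.sqrt b * z) ^ 2 / Real.sin (Real.sqrt b * d) ^ 2 := by
  set s := Real.sqrt b with hsdef
  have hs0 : s ≠ 0 := (Real.sqrt_pos.mpr hb).ne'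
  have hss : s * s = b := Real.mul_self_sqrt hb.le
  have hu00 : u₀ 0 = 0 := by simp [hu₀]
  have hu0d : u₀ d = 1 := by rw [hu₀]; simp [div_self hsin]
  have hcu0 : Continuous u₀ := by rw [hu₀]; continuity
  have hcω : Continuous ω₁ := hω₁.continuous
  have hcω' : Continuous (deriv ω₁) := hω₁.continuous_deriv le_rfl
  have hdu₁ : ContDiff ℝ 1 (deriv u₁) := by
    have h2 : ContDiff ℝ ((1:ℕ)+1 : ℕ) u₁ := by exact_mod_cast hu₁
    exact (contDiff_succ_iff_deriv.mp h2).2.2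
  have hcs : Continuous fun z : ℝ => Real.sin (s*z) :=
    Real.continuous_sin.comp (continuous_const.mul continuous_id)
  have hcc : Continuous fun z : ℝ => Real.cos (s*z) :=
    Real.continuous_cos.comp (continuous_const.mul continuous_id)
  have hc1 : Continuous fun z => ω₁ (u₀ z) * Real.sin (s*z) := (hcω.comp hcu0).mul hcs
  have hc2 : Continuous fun z => deriv ω₁ (u₀ z) * Real.cos (s*z) ^ 2 / Real.sin (s*d) :=
    ((hcω'.comp hcu0).mul (hcc.pow 2)).div_const _
  -- Part 1
  have key1 : ∫ z in (0:ℝ)..d, -(ω₁ (u₀ z) * Real.sin (s * z)) =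
      deriv u₁ d * Real.sin (s * d) := by
    have hW : ∀ z ∈ Set.uIcc (0:ℝ) d,
        HasDerivAt (fun z => deriv u₁ z * Real.sin (s*z) - u₁ z * (s * Real.cos (s*z)))
          (-(ω₁ (u₀ z) * Real.sin (s*z))) z := by
      intro z hz
      have hz' : z ∈ Set.Icc (0:ℝ) d := by rwa [Set.uIcc_of_le hd.le] at hz
      have h1 : HasDerivAt u₁ (deriv u₁ z) z :=
        ((hu₁.differentiable (by norm_num)) z).hasDerivAt
      have h2 : HasDerivAt (deriv u₁) (deriv (deriv u₁) z) z :=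
        ((hdu₁.differentiable (by norm_num)) z).hasDerivAt
      have hlin : HasDerivAt (fun y : ℝ => s * y) s z := by
        simpa using (hasDerivAt_id z).const_mul s
      have hsin' : HasDerivAt (fun y => Real.sin (s*y)) (Real.cos (s*z) * s) z := hlin.sin
      have hcos' : HasDerivAt (fun y => Real.cos (s*y)) (-Real.sin (s*z) * s) z := hlin.cos
      have := (h2.mul hsin').sub (h1.mul (hcos'.const_mul s))
      refine this.congr_deriv ?_
      have hO := hode z hz'
      linear_combination Real.sin (s*z) * hO + u₁ z * Real.sin (s*z) * hss
    have := intervalIntegral.integral_eq_sub_of_hasDerivAt hW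
      (hc1.neg.intervalIntegrable 0 d)
    rw [this]
    simp [h0, hdd]
  have hint1 : IntervalIntegrable (fun z => ω₁ (u₀ z) * Real.sin (s * z)) MeasureTheory.volume 0 d :=
    hc1.intervalIntegrable 0 d
  have e1 : deriv u₁ d = -(1 / Real.sin (s * d)) * ∫ z in (0:ℝ)..d, ω₁ (u₀ z) * Real.sin (s * z) := by
    rw [intervalIntegral.integral_neg] at key1
    field_simp
    linarith [key1]
  refine ⟨e1, ?_⟩
  -- Part 2
  have key2 : ∫ z in (0:ℝ)..d,
      (ω₁ (u₀ z) * Real.sin (s*z) - deriv ω₁ (u₀ z) * Real.cos (s*z) ^ 2 / Real.sin (s*d)) = 0 := by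
    have hG : ∀ z ∈ Set.uIcc (0:ℝ) d,
        HasDerivAt (fun z => ω₁ (u₀ z) * (-Real.cos (s*z) / s))
          (ω₁ (u₀ z) * Real.sin (s*z) - deriv ω₁ (u₀ z) * Real.cos (s*z) ^ 2 / Real.sin (s*d)) z := by
      intro z _
      have hlin : HasDerivAt (fun y : ℝ => s * y) s z := by
        simpa using (hasDerivAt_id z).const_mul s
      have hu0' : HasDerivAt u₀ (Real.cos (s*z) * s / Real.sin (s*d)) z := by
        rw [hu₀]; exact hlin.sin.div_const _
      have hω' : HasDerivAt (fun y => ω₁ (u₀ y))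
          (deriv ω₁ (u₀ z) * (Real.cos (s*z) * s / Real.sin (s*d))) z :=
        (((hω₁.differentiable (by norm_num)) (u₀ z)).hasDerivAt).comp z hu0'
      have hc : HasDerivAt (fun y => -Real.cos (s*y) / s) (Real.sin (s*z)) z := by
        have := (hlin.cos.neg).div_const s
        refine this.congr_deriv ?_
        field_simp
      have := hω'.mul hc
      refine this.congr_deriv ?_
      field_simp
      ring
    have := intervalIntegral.integral_eq_sub_of_hasDerivAt hG
      ((hc1.sub hc2).intervalIntegrable 0 d)
    rw [this]
    simp [hu00, hu0d, hω₁0, hω₁1]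
  have hint2 : IntervalIntegrable (fun z => deriv ω₁ (u₀ z) * Real.cos (s*z) ^ 2 / Real.sin (s*d))
      MeasureTheory.volume 0 d := hc2.intervalIntegrable 0 d
  rw [intervalIntegral.integral_sub hint1 hint2, sub_eq_zero] at key2
  have e2 : ∫ z in (0:ℝ)..d, deriv ω₁ (u₀ z) * Real.cos (s*z) ^ 2 / Real.sin (s*d) ^ 2
      = (1 / Real.sin (s*d)) * ∫ z in (0:ℝ)..d, deriv ω₁ (u₀ z) * Real.cos (s*z) ^ 2 / Real.sin (s*d) := by
    rw [← intervalIntegral.integral_const_mul]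
    apply intervalIntegral.integral_congr
    intro z _
    simp only [pow_two]
    rw [one_div, inv_mul_eq_div, div_div]
  rw [e2, ← key2, e1]
  ring
end

section
/- Let b, d > 0 with b + μ > 0 for a real number μ, and let κ ∈ ℝ. The Sturm-Liouville problem −φ'' − b·φ = μ·φ on (0,d), φ(0) = 0, φ'(d) = κ·φ(d) has a nontrivial solution if and only if √(b+μ)·cos(√(b+μ)·d) = κ·sin(√(b+μ)·d). -/
open Real Set

theorem stmt_7 (b d μ κ : ℝ) (hb : 0 < b) (hd : 0 < d) (hbμ : 0 < b + μ) :
    (∃ φ : ℝ → ℝ, ContDiff ℝ 2 φ ∧ (¬ ∀ z ∈ Set.Icc (0:ℝ) d, φ z = 0) ∧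
      (∀ z ∈ Set.Ioo (0:ℝ) d, -(deriv (deriv φ) z) - b * φ z = μ * φ z) ∧
      φ 0 = 0 ∧ deriv φ d = κ * φ d) ↔
    Real.sqrt (b + μ) * Real.cos (Real.sqrt (b + μ) * d)
      = κ * Real.sin (Real.sqrt (b + μ) * d) := by
  set ω := Real.sqrt (b + μ) with hωdef
  have hωpos : 0 < ω := Real.sqrt_pos.2 hbμ
  have hω2 : ω ^ 2 = b + μ := Real.sq_sqrt hbμ.le
  have hlin : ∀ x : ℝ, HasDerivAt (fun z : ℝ => ω * z) ω x := by
    intro x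
    simpa using (hasDerivAt_id x).const_mul ω
  have hsin : ∀ x : ℝ, HasDerivAt (fun z : ℝ => Real.sin (ω * z)) (Real.cos (ω * x) * ω) x :=
    fun x => (Real.hasDerivAt_sin (ω * x)).comp x (hlin x)
  have hcos : ∀ x : ℝ, HasDerivAt (fun z : ℝ => Real.cos (ω * z)) (-Real.sin (ω * x) * ω) x :=
    fun x => (Real.hasDerivAt_cos (ω * x)).comp x (hlin x)
  constructor
  · rintro ⟨φ, hφ, hnt, hode, h0, hbc⟩
    have hd1 : Differentiable ℝ φ := hφ.differentiable (by norm_num)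
    have hd2 : Differentiable ℝ (deriv φ) := by
      have h2 : ContDiff ℝ ((1 : ℕ∞) + 1) φ := by exact_mod_cast hφ
      exact ((contDiff_succ_iff_deriv.mp h2).2.2).differentiable (by norm_num)
    have hcd : Continuous (deriv φ) := hφ.continuous_deriv (by norm_num)
    set C := deriv φ 0 / ω with hC
    set E : ℝ → ℝ := fun z =>
      (deriv φ z - C * ω * Real.cos (ω * z)) ^ 2
        + ω ^ 2 * (φ z - C * Real.sin (ω * z)) ^ 2 with hE
    have hEderiv : ∀ x ∈ Set.Ico (0:ℝ) d, HasDerivAt E 0 x := by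
      intro x hx
      have hP : HasDerivAt (fun z => deriv φ z - C * ω * Real.cos (ω * z))
          (deriv (deriv φ) x - C * ω * (-Real.sin (ω * x) * ω)) x :=
        (hd2 x).hasDerivAt.sub ((hcos x).const_mul (C * ω))
      have hQ : HasDerivAt (fun z => φ z - C * Real.sin (ω * z))
          (deriv φ x - C * (Real.cos (ω * x) * ω)) x :=
        (hd1 x).hasDerivAt.sub ((hsin x).const_mul C)
      have hEd : HasDerivAt E
          (2 * (deriv φ x - C * ω * Real.cos (ω * x)) ^ 1
              * (deriv (deriv φ) x - C * ω * (-Real.sin (ω * x) * ω))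
            + ω ^ 2 * (2 * (φ x - C * Real.sin (ω * x)) ^ 1
              * (deriv φ x - C * (Real.cos (ω * x) * ω)))) x :=
        (hP.pow 2).add ((hQ.pow 2).const_mul (ω ^ 2))
      convert hEd using 1
      rcases eq_or_lt_of_le hx.1 with h0x | h0x
      · -- x = 0 : then deriv φ x - C ω cos = 0
        have hx0 : x = 0 := h0x.symm
        have hP0 : deriv φ x - C * ω * Real.cos (ω * x) = 0 := by
          rw [hx0, mul_zero, Real.cos_zero, hC]
          field_simp
          ring
        rw [eq_comm]
        have h1 : 2 * (deriv φ x - C * ω * Real.cos (ω * x)) ^ 1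
              * (deriv (deriv φ) x - C * ω * (-Real.sin (ω * x) * ω))
            = 0 := by rw [hP0]; ring
        have h2 : ω ^ 2 * (2 * (φ x - C * Real.sin (ω * x)) ^ 1
              * (deriv φ x - C * (Real.cos (ω * x) * ω))) = 0 := by
          rw [show deriv φ x - C * (Real.cos (ω * x) * ω)
              = deriv φ x - C * ω * Real.cos (ω * x) by ring, hP0]; ring
        rw [h1, h2, add_zero]
      · -- x ∈ (0, d)
        have hode' : deriv (deriv φ) x = -(ω ^ 2) * φ x := by
          have := hode x ⟨h0x, hx.2⟩
          rw [hω2]; linarith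
        rw [eq_comm, hode']
        ring
    have hEcont : ContinuousOn E (Set.Icc 0 d) := by
      apply Continuous.continuousOn
      apply Continuous.add
      · exact (hcd.sub (continuous_const.mul
          (Real.continuous_cos.comp (continuous_const.mul continuous_id)))).pow 2
      · exact continuous_const.mul ((hd1.continuous.sub (continuous_const.mul
          (Real.continuous_sin.comp (continuous_const.mul continuous_id)))).pow 2)
    have hEconst : ∀ x ∈ Set.Icc (0:ℝ) d, E x = E 0 :=
      constant_of_has_deriv_right_zero hEcont
        (fun x hx => (hEderiv x hx).hasDerivWithinAt)
    have hE0 : E 0 = 0 := by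
      simp only [hE, mul_zero, Real.cos_zero, Real.sin_zero, h0]
      rw [hC]
      field_simp
      ring
    have hEzero : ∀ x ∈ Set.Icc (0:ℝ) d, E x = 0 := fun x hx => (hEconst x hx).trans hE0
    -- Extract: φ x = C sin(ωx), deriv φ x = C ω cos(ωx) on [0,d]
    have hkey : ∀ x ∈ Set.Icc (0:ℝ) d,
        φ x = C * Real.sin (ω * x) ∧ deriv φ x = C * ω * Real.cos (ω * x) := by
      intro x hx
      have hEx : (deriv φ x - C * ω * Real.cos (ω * x)) ^ 2
          + ω ^ 2 * (φ x - C * Real.sin (ω * x)) ^ 2 = 0 := hEzero x hx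
      have hP2 : (0:ℝ) ≤ (deriv φ x - C * ω * Real.cos (ω * x)) ^ 2 := sq_nonneg _
      have hQ2 : (0:ℝ) ≤ ω ^ 2 * (φ x - C * Real.sin (ω * x)) ^ 2 :=
        mul_nonneg (sq_nonneg _) (sq_nonneg _)
      have hP0 : deriv φ x - C * ω * Real.cos (ω * x) = 0 := by
        have : (deriv φ x - C * ω * Real.cos (ω * x)) ^ 2 = 0 := by linarith
        exact pow_eq_zero_iff (by norm_num) |>.mp this
      have hQ0 : φ x - C * Real.sin (ω * x) = 0 := by
        have h1 : ω ^ 2 * (φ x - C * Real.sin (ω * x)) ^ 2 = 0 := by linarith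
        have hω2ne : ω ^ 2 ≠ 0 := by positivity
        have h2 : (φ x - C * Real.sin (ω * x)) ^ 2 = 0 :=
          (mul_eq_zero.mp h1).resolve_left hω2ne
        exact pow_eq_zero_iff (by norm_num) |>.mp h2
      constructor <;> linarith
    have hCne : C ≠ 0 := by
      intro hC0
      apply hnt
      intro z hz
      have := (hkey z hz).1
      rw [this, hC0, zero_mul]
    have hφd := (hkey d ⟨hd.le, le_rfl⟩).1
    have hdφd := (hkey d ⟨hd.le, le_rfl⟩).2
    rw [hdφd, hφd] at hbc
    have : C * (ω * Real.cos (ω * d)) = C * (κ * Real.sin (ω * d)) := by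
      linarith [hbc]
    have := mul_left_cancel₀ hCne this
    linarith
  · intro h
    refine ⟨fun z => Real.sin (ω * z), ?_, ?_, ?_, ?_, ?_⟩
    · exact (Real.contDiff_sin.of_le le_top).comp (contDiff_const.mul contDiff_id)
    · intro hall
      set z0 := min d (π / (2 * ω)) with hz0
      have hz0pos : 0 < z0 := lt_min hd (by positivity)
      have hz0d : z0 ≤ d := min_le_left _ _
      have hsinpos : 0 < Real.sin (ω * z0) := by
        apply Real.sin_pos_of_pos_of_lt_pi
        · positivity
        · have : ω * z0 ≤ ω * (π / (2 * ω)) :=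
            mul_le_mul_of_nonneg_left (min_le_right _ _) hωpos.le
          have heq : ω * (π / (2 * ω)) = π / 2 := by field_simp
          have hππ : π / 2 < π := by linarith [Real.pi_pos]
          linarith
      have := hall z0 ⟨hz0pos.le, hz0d⟩
      linarith
    · intro z hz
      have hderiv1 : deriv (fun z : ℝ => Real.sin (ω * z))
          = fun x => ω * Real.cos (ω * x) := by
        funext x
        rw [(hsin x).deriv]; ring
      have hderiv2 : deriv (deriv (fun z : ℝ => Real.sin (ω * z))) z
          = -(ω ^ 2) * Real.sin (ω * z) := by
        rw [hderiv1]
        rw [((hcos z).const_mul ω).deriv]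
        ring
      rw [hderiv2]
      show -(-(ω ^ 2) * Real.sin (ω * z)) - b * Real.sin (ω * z) = μ * Real.sin (ω * z)
      rw [hω2]; ring
    · simp
    · rw [(hsin d).deriv]
      rw [← h]
      ring
end
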